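/- Let f be a ρ-symmetric bounded affine permutation of type (n,2n), and let (i,j) be a pair of integers with i < j ≤ f(j) < f(i) (an alignment of f). Then the pair (f(j)+n, f(i)+n) is again an alignment of f; that is, f(j)+n < f(i)+n ≤ f(f(i)+n) < f(f(j)+n). -/

import Mathlib

/-- If `f` is a ρ-symmetric bounded affine permutation of type `(n,2n)` and `(i,j)` is an
alignment of `f` (i.e. `i < j ≤ f j < f i`), then `(f j + n, f i + n)` is again an
alignment of `f`. -/
theorem stmt5 (n : ℕ) (f : ℤ → ℤ)
    (hbij : Function.Bijective f)
    (hper : ∀ i : ℤ, f (i + 2 * (n : ℤ)) = f i + 2 * (n : ℤ))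
    (hbound : ∀ i : ℤ, i ≤ f i ∧ f i ≤ i + 2 * (n : ℤ))
    (hsum : ∑ i ∈ Finset.Icc (1 : ℤ) (2 * (n : ℤ)), (f i - i) = 2 * (n : ℤ) ^ 2)
    (hsym : ∀ i : ℤ, f (f i - (n : ℤ)) = i + (n : ℤ))
    (i j : ℤ) (hij : i < j) (hjf : j ≤ f j) (hff : f j < f i) :
    f j + (n : ℤ) < f i + (n : ℤ) ∧
    f i + (n : ℤ) ≤ f (f i + (n : ℤ)) ∧
    f (f i + (n : ℤ)) < f (f j + (n : ℤ)) := by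
  have key : ∀ k : ℤ, f (f k + (n : ℤ)) = k + 3 * (n : ℤ) := by
    intro k
    have h1 : f k + (n : ℤ) = (f k - (n : ℤ)) + 2 * (n : ℤ) := by ring
    rw [h1, hper, hsym]
    ring
  refine ⟨by linarith, ?_, ?_⟩
  · rw [key]
    have := (hbound i).2
    linarith
  · rw [key, key]
    linarith
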